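/- Let σ ≥ 2 and σ' ≥ 2 be integers. If the tuple (0; 2, 2σ+1, 4σ+2) is a potential signature for genus σ', then (σ − 1) divides (σ' − 1). -/

import Mathlib

/-- The Riemann–Hurwitz formula `σ - 1 = N (h - 1 + (1/2) Σ (1 - 1/mᵢ))`
as an equality of rational numbers. -/
def RHFormula (σ N h : ℕ) (m : List ℕ) : Prop :=
  (σ : ℚ) - 1 = (N : ℚ) * ((h : ℚ) - 1 + (1 / 2) * (m.map (fun x => 1 - 1 / (x : ℚ))).sum)

/-- `(h; m₁, …, m_r)` is a potential signature for genus `σ`: each `mᵢ ≥ 2` and there is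
a positive integer `N` with `mᵢ ∣ N` for all `i` satisfying the Riemann–Hurwitz formula. -/
def IsPotentialSignature (σ h : ℕ) (m : List ℕ) : Prop :=
  (∀ x ∈ m, 2 ≤ x) ∧ ∃ N : ℕ, 0 < N ∧ (∀ x ∈ m, x ∣ N) ∧ RHFormula σ N h m

/-- The set `P_σ` of potential signatures for genus `σ`, as a set of pairs `(h, [m₁, …, m_r])`. -/
def PotSig (σ : ℕ) : Set (ℕ × List ℕ) := {p | IsPotentialSignature σ p.1 p.2}

/-- If `(0; 2, 2σ + 1, 4σ + 2)` is a potential signature for genus `σ'`, then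
`(σ - 1) ∣ (σ' - 1)`. -/
theorem kulkarni_potential_dvd (σ σ' : ℕ) (hσ : 2 ≤ σ) (hσ' : 2 ≤ σ')
    (hpot : IsPotentialSignature σ' 0 [2, 2 * σ + 1, 4 * σ + 2]) :
    (σ - 1) ∣ (σ' - 1) := by
  obtain ⟨-, N, hNpos, hdvd, hRH⟩ := hpot
  obtain ⟨k, hk⟩ := hdvd (4 * σ + 2) (by simp)
  refine ⟨k, ?_⟩
  simp only [RHFormula, List.map_cons, List.map_nil, List.sum_cons, List.sum_nil, List.bind_eq_flatMap, List.flatMap_cons, List.flatMap_nil, List.pure_def, List.singleton_append] at hRH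
  subst hk
  have h1 : (2 * (σ:ℚ) + 1) ≠ 0 := by positivity
  have h2 : (4 * (σ:ℚ) + 2) ≠ 0 := by positivity
  push_cast at hRH
  field_simp at hRH
  have key : (σ':ℚ) - 1 = ((σ:ℚ) - 1) * k := by
    have hc : ((σ':ℚ) - 1) * (2 * σ + 1) ^ 2 = (((σ:ℚ) - 1) * k) * (2 * σ + 1) ^ 2 := by
      linear_combination (2 * (σ:ℚ) + 1) / 4 * hRH
    exact mul_right_cancel₀ (pow_ne_zero 2 h1) hc
  have : ((σ' - 1 : ℕ) : ℚ) = (((σ - 1) * k : ℕ) : ℚ) := by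
    push_cast [Nat.cast_sub (by omega : 1 ≤ σ'), Nat.cast_sub (by omega : 1 ≤ σ)]
    linarith [key]
  exact_mod_cast this
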